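/- arXiv:2310.11420 — 3 statements merged into one kernel-verified Lean document; each statement's English description precedes it below -/
import Mathlib

section
/- Let F_X and F_Y be real n×c matrices. If there exists a unique permutation matrix Π minimising the Frobenius objective ‖Π F_X − F_Y‖_F² over all n×n permutation matrices, then F_X has pairwise distinct rows. -/
open Matrix BigOperators

/-- A permutation matrix: a square 0–1 matrix with exactly one entry equal to 1
in each row and each column. -/
def IsPermMatrix {n : ℕ} (P : Matrix (Fin n) (Fin n) ℝ) : Prop :=
  (∀ i j, P i j = 0 ∨ P i j = 1) ∧ (∀ i, ∑ j, P i j = 1) ∧ (∀ j, ∑ i, P i j = 1)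

/-- Squared Frobenius norm. -/
def frobSq {m c : ℕ} (M : Matrix (Fin m) (Fin c) ℝ) : ℝ :=
  ∑ i, ∑ j, (M i j) ^ 2

/-- If there is a unique permutation matrix minimising ‖Π F_X − F_Y‖_F² over all
permutation matrices, then F_X has pairwise distinct rows. -/
theorem stmt0 {n c : ℕ} (FX FY : Matrix (Fin n) (Fin c) ℝ)
    (h : ∃! Pmat : Matrix (Fin n) (Fin n) ℝ, IsPermMatrix Pmat ∧
      ∀ Q : Matrix (Fin n) (Fin n) ℝ, IsPermMatrix Q →
        frobSq (Pmat * FX - FY) ≤ frobSq (Q * FX - FY)) :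
    ∀ i j : Fin n, i ≠ j → FX i ≠ FX j := by
  intro i j hij heq
  obtain ⟨P, ⟨hP, hmin⟩, huniq⟩ := h
  set Q : Matrix (Fin n) (Fin n) ℝ := fun a b => P a (Equiv.swap i j b) with hQdef
  have hQperm : IsPermMatrix Q := by
    obtain ⟨h01, hrow, hcol⟩ := hP
    refine ⟨fun a b => h01 a _, fun a => ?_, fun b => ?_⟩
    · rw [← hrow a]
      exact Equiv.sum_comp (Equiv.swap i j) (fun b => P a b)
    · exact hcol _
  have hprod : Q * FX = P * FX := by
    ext a k
    simp only [Matrix.mul_apply, hQdef]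
    rw [← Equiv.sum_comp (Equiv.swap i j) (fun b => P a b * FX b k)]
    change ∑ b, P a (Equiv.swap i j b) * FX b k = _
    refine Finset.sum_congr rfl fun b _ => ?_
    congr 1
    rcases Equiv.swap_apply_def i j b with _
    by_cases hbi : b = i
    · simp [hbi, Equiv.swap_apply_left, heq]
    · by_cases hbj : b = j
      · simp [hbj, Equiv.swap_apply_right, heq]
      · rw [Equiv.swap_apply_of_ne_of_ne hbi hbj]
  have hQeq : Q = P := by
    apply huniq
    refine ⟨hQperm, fun R hR => ?_⟩
    rw [hprod]
    exact hmin R hR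
  -- derive contradiction: P a j = P a i for all a
  obtain ⟨h01, hrow, hcol⟩ := hP
  -- some a has P a i = 1
  have hex : ∃ a, P a i = 1 := by
    by_contra hno
    push_neg at hno
    have : ∑ a, P a i = 0 := Finset.sum_eq_zero fun a _ =>
      (h01 a i).resolve_right (hno a)
    rw [hcol i] at this; norm_num at this
  obtain ⟨a, ha⟩ := hex
  have haj : P a j = 1 := by
    have := congrFun (congrFun hQeq a) i
    simp only [hQdef, Equiv.swap_apply_left] at this
    rw [this, ha]
  have hle : P a i + P a j ≤ ∑ b, P a b := by
    rw [← Finset.sum_pair hij]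
    apply Finset.sum_le_sum_of_subset_of_nonneg (Finset.subset_univ _)
    intro b _ _
    rcases h01 a b with h0 | h1
    · rw [h0]
    · rw [h1]; norm_num
  rw [ha, haj, hrow a] at hle
  norm_num at hle
end

section
/- Let F_X and F_Y be real n×c matrices. If there exists a unique permutation matrix Π minimising the Frobenius objective ‖Π F_X − F_Y‖_F² over all n×n permutation matrices, then F_Y has pairwise distinct rows. -/
open Matrix BigOperators

/-- If there is a unique permutation matrix minimising ‖Π F_X − F_Y‖_F² over all
permutation matrices, then F_Y has pairwise distinct rows. -/
theorem stmt1 {n c : ℕ} (FX FY : Matrix (Fin n) (Fin c) ℝ)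
    (h : ∃! Pmat : Matrix (Fin n) (Fin n) ℝ, IsPermMatrix Pmat ∧
      ∀ Q : Matrix (Fin n) (Fin n) ℝ, IsPermMatrix Q →
        frobSq (Pmat * FX - FY) ≤ frobSq (Q * FX - FY)) :
    ∀ i j : Fin n, i ≠ j → FY i ≠ FY j := by
  intro i j hij hYrow
  obtain ⟨P, ⟨hP, hPmin⟩, huniq⟩ := h
  set σ := Equiv.swap i j with hσ
  set Q : Matrix (Fin n) (Fin n) ℝ := fun k l => P (σ k) l with hQ
  have hFYσ : ∀ k, FY (σ k) = FY k := by
    intro k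
    rcases eq_or_ne k i with rfl | hki
    · simpa [hσ, Equiv.swap_apply_left] using hYrow.symm
    rcases eq_or_ne k j with rfl | hkj
    · simpa [hσ, Equiv.swap_apply_right] using hYrow
    · simp [hσ, Equiv.swap_apply_of_ne_of_ne hki hkj]
  have hQperm : IsPermMatrix Q := by
    refine ⟨fun k l => hP.1 _ _, fun k => hP.2.1 _, fun l => ?_⟩
    rw [← hP.2.2 l]
    exact Fintype.sum_equiv σ _ _ (fun k => rfl)
  have hmul : ∀ k l, (Q * FX) k l = (P * FX) (σ k) l := by
    intro k l; simp [Matrix.mul_apply, hQ]; exact Matrix.mul_apply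
  have hfrob : frobSq (Q * FX - FY) = frobSq (P * FX - FY) := by
    unfold frobSq
    refine Fintype.sum_equiv σ _ _ (fun k => ?_)
    refine Finset.sum_congr rfl (fun l _ => ?_)
    rw [Matrix.sub_apply, Matrix.sub_apply, hmul, hFYσ]
  have hQmin : ∀ R : Matrix (Fin n) (Fin n) ℝ, IsPermMatrix R →
      frobSq (Q * FX - FY) ≤ frobSq (R * FX - FY) := by
    intro R hR; rw [hfrob]; exact hPmin R hR
  have hQP : Q = P := huniq Q ⟨hQperm, hQmin⟩
  -- From Q = P, rows i and j of P coincide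
  have hrow : ∀ l, P j l = P i l := by
    intro l
    have := congrFun (congrFun hQP i) l
    simpa [hQ, hσ, Equiv.swap_apply_left] using this
  -- row i has an entry equal to 1
  obtain ⟨m, hm⟩ : ∃ m, P i m = 1 := by
    by_contra hcon
    push_neg at hcon
    have : ∑ l, P i l = 0 := by
      refine Finset.sum_eq_zero (fun l _ => ?_)
      rcases hP.1 i l with h0 | h1
      · exact h0
      · exact absurd h1 (hcon l)
    rw [hP.2.1 i] at this; norm_num at this
  -- column m sums to at least 2
  have hsum : (2 : ℝ) ≤ ∑ k, P k m := by
    have hsub : ({i, j} : Finset (Fin n)) ⊆ Finset.univ := Finset.subset_univ _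
    have h2 : ∑ k ∈ ({i, j} : Finset (Fin n)), P k m = 2 := by
      rw [Finset.sum_pair hij, hm, hrow m, hm]; norm_num
    calc (2 : ℝ) = ∑ k ∈ ({i, j} : Finset (Fin n)), P k m := h2.symm
      _ ≤ ∑ k, P k m := Finset.sum_le_sum_of_subset_of_nonneg hsub
          (fun k _ _ => by rcases hP.1 k m with h | h <;> simp [h])
  rw [hP.2.2 m] at hsum; norm_num at hsum
end

section
/- Let Φ_X be a real n_X×k matrix, Φ_Y a real n_Y×k matrix, and Φ_Y† a real k×n_Y matrix with Φ_Y† Φ_Y = I_k. Let A_X and A_Y be real k×c matrices with k ≤ c, where A_X has rank k, and let Π be a real n_Y×n_X matrix such that Π (Φ_X A_X) = Φ_Y A_Y. Then every global minimiser C of the energy C ↦ ‖C A_X − A_Y‖_F² over real k×k matrices equals C^Π := Φ_Y† Π Φ_X, and the minimum value satisfies ‖C A_X − A_Y‖_F² = 0. -/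
open Matrix BigOperators

lemma frobSq_nonneg {m c : ℕ} (M : Matrix (Fin m) (Fin c) ℝ) : 0 ≤ frobSq M := by
  apply Finset.sum_nonneg; intro i _
  apply Finset.sum_nonneg; intro j _
  positivity

lemma frobSq_eq_zero_iff {m c : ℕ} (M : Matrix (Fin m) (Fin c) ℝ) :
    frobSq M = 0 ↔ M = 0 := by
  constructor
  · intro h
    ext i j
    have h1 : ∀ i ∈ Finset.univ, (0:ℝ) ≤ ∑ j, (M i j) ^ 2 := by
      intro i _; apply Finset.sum_nonneg; intro j _; positivity
    have h2 := (Finset.sum_eq_zero_iff_of_nonneg h1).mp h i (Finset.mem_univ i)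
    have h3 : ∀ j ∈ Finset.univ, (0:ℝ) ≤ (M i j) ^ 2 := by
      intro j _; positivity
    have := (Finset.sum_eq_zero_iff_of_nonneg h3).mp h2 j (Finset.mem_univ j)
    simpa using pow_eq_zero_iff (n := 2) (by norm_num) |>.mp this
  · rintro rfl; simp [frobSq]

/-- Theorem 4.2: if `Φ_Y† Φ_Y = I`, `A_X` (k×c, k ≤ c) has full rank `k`, and the
point-wise map `Π` satisfies `Π (Φ_X A_X) = Φ_Y A_Y`, then every global minimiser
`C` of `C ↦ ‖C A_X − A_Y‖_F²` equals `C^Π = Φ_Y† Π Φ_X`, and the minimum value is 0. -/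
theorem stmt12 {nX nY k c : ℕ} (hkc : k ≤ c)
    (ΦX : Matrix (Fin nX) (Fin k) ℝ) (ΦY : Matrix (Fin nY) (Fin k) ℝ)
    (ΦYd : Matrix (Fin k) (Fin nY) ℝ)
    (hleft : ΦYd * ΦY = (1 : Matrix (Fin k) (Fin k) ℝ))
    (AX AY : Matrix (Fin k) (Fin c) ℝ) (hrank : AX.rank = k)
    (Pm : Matrix (Fin nY) (Fin nX) ℝ)
    (hPm : Pm * (ΦX * AX) = ΦY * AY) :
    ∀ C : Matrix (Fin k) (Fin k) ℝ,
      (∀ C' : Matrix (Fin k) (Fin k) ℝ,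
        frobSq (C * AX - AY) ≤ frobSq (C' * AX - AY)) →
      C = ΦYd * Pm * ΦX ∧ frobSq (C * AX - AY) = 0 := by
  intro C hmin
  -- Cπ achieves value 0
  have hCπ : (ΦYd * Pm * ΦX) * AX = AY := by
    calc (ΦYd * Pm * ΦX) * AX = ΦYd * (Pm * (ΦX * AX)) := by
          simp [Matrix.mul_assoc]
      _ = ΦYd * (ΦY * AY) := by rw [hPm]
      _ = (ΦYd * ΦY) * AY := by rw [Matrix.mul_assoc]
      _ = AY := by rw [hleft, Matrix.one_mul]
  have hzero : frobSq (C * AX - AY) = 0 := by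
    have h1 := hmin (ΦYd * Pm * ΦX)
    rw [hCπ] at h1
    simp only [sub_self] at h1
    have : frobSq (0 : Matrix (Fin k) (Fin c) ℝ) = 0 := by simp [frobSq]
    rw [this] at h1
    exact le_antisymm h1 (frobSq_nonneg _)
  have hCA : C * AX = AY := by
    exact sub_eq_zero.mp ((frobSq_eq_zero_iff _).mp hzero)
  refine ⟨?_, hzero⟩
  -- rows of AX are linearly independent
  have hli : LinearIndependent ℝ (fun i => AX i) := by
    rw [linearIndependent_iff_card_eq_finrank_span]
    have := AX.rank_eq_finrank_span_row
    rw [hrank] at this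
    simp [Set.finrank, Matrix.row] at this ⊢; exact this
  have hinj : Function.Injective AX.vecMul := Matrix.vecMul_injective_iff.mpr hli
  have key : ∀ M : Matrix (Fin k) (Fin k) ℝ, ∀ i, (M * AX) i = AX.vecMul (M i) := by
    intro M i
    funext j
    simp [Matrix.mul_apply, Matrix.vecMul, dotProduct]
  ext i j
  have h1 : AX.vecMul (C i) = AX.vecMul ((ΦYd * Pm * ΦX) i) := by
    rw [← key, ← key, hCA, hCπ]
  exact congrFun (hinj h1) j
end
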